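/- A function u : ℤ³ → {−1,1} is in the image of ψ — i.e., there exist t₁, t₂, t₃ : ℤ² → {−1,1} with u(a,b,c) = t₁(b,c)·t₂(a,c)·t₃(a,b) for all (a,b,c) ∈ ℤ³ — if and only if for every v ∈ ℤ³, ∏_{ε∈{0,1}³} u(v+ε) = 1 (equivalently, the product of the values of u over the 8 unit cubes incident to any vertex of ℤ³ equals 1). -/

import Mathlib

open Finset

abbrev Z3 := ℤ × ℤ × ℤ

/-- The 8 vectors in {0,1}³. -/
def cube01 : Finset Z3 :=
  ({0, 1} : Finset ℤ) ×ˢ (({0, 1} : Finset ℤ) ×ˢ ({0, 1} : Finset ℤ))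

lemma aux_sq {x : ℤ} (h : x = 1 ∨ x = -1) : x * x = 1 := by
  rcases h with h | h <;> simp [h]

lemma aux_cancel {x y : ℤ} (hx : x = 1 ∨ x = -1) (h : x * y = 1) : y = x := by
  rcases hx with hx | hx <;> subst hx <;> linarith

lemma aux_cube_prod (f : Z3 → ℤ) (a b c : ℤ) :
    ∏ ε ∈ cube01, f ((a,b,c) + ε) =
      f (a,b,c) * f (a+1,b,c) * (f (a,b+1,c) * f (a+1,b+1,c)) *
      (f (a,b,c+1) * f (a+1,b,c+1) * (f (a,b+1,c+1) * f (a+1,b+1,c+1))) := by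
  simp [cube01, Finset.prod_product, Prod.mk_add_mk, Prod.ext_iff]
  ring

lemma aux_one_dim (h : ℤ → ℤ) (h0 : h 0 = 1) (hstep : ∀ a : ℤ, h (a + 1) = h a) :
    ∀ a, h a = 1 := by
  intro a
  induction a using Int.induction_on with
  | zero => exact h0
  | succ n ih => rw [hstep]; exact ih
  | pred n ih =>
    have e := hstep (-(n : ℤ) - 1)
    have e2 : (-(n : ℤ) - 1) + 1 = -n := by ring
    rw [e2] at e
    rw [← e]
    exact ih

lemma aux_two_dim (g : ℤ → ℤ → ℤ) (hs : ∀ a b, g a b = 1 ∨ g a b = -1)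
    (hb : ∀ a, g a 0 = 1) (h0 : ∀ b, g 0 b = 1)
    (hrel : ∀ a b, g a b * g (a+1) b * (g a (b+1) * g (a+1) (b+1)) = 1) :
    ∀ a b, g a b = 1 := by
  have key : ∀ b a, g a b = 1 := by
    intro b
    induction b using Int.induction_on with
    | zero => exact hb
    | succ n ih =>
      apply aux_one_dim (fun a => g a ((n : ℤ) + 1)) (h0 _)
      intro a
      have h := hrel a n
      rw [ih a, ih (a+1)] at h
      simp only [one_mul] at h
      exact aux_cancel (hs a _) h
    | pred n ih =>
      apply aux_one_dim (fun a => g a (-(n : ℤ) - 1)) (h0 _)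
      intro a
      have h := hrel a (-(n : ℤ) - 1)
      have e2 : (-(n : ℤ) - 1) + 1 = -(n : ℤ) := by ring
      rw [e2, ih a, ih (a+1)] at h
      simp only [one_mul, mul_one] at h
      exact aux_cancel (hs a _) h
  exact fun a b => key b a

lemma aux_three_dim (f : ℤ → ℤ → ℤ → ℤ) (hs : ∀ a b c, f a b c = 1 ∨ f a b c = -1)
    (hc : ∀ a b, f a b 0 = 1) (hbz : ∀ a c, f a 0 c = 1) (haz : ∀ b c, f 0 b c = 1)
    (hrel : ∀ a b c,
      (f a b c * f (a+1) b c * (f a (b+1) c * f (a+1) (b+1) c)) *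
      (f a b (c+1) * f (a+1) b (c+1) * (f a (b+1) (c+1) * f (a+1) (b+1) (c+1))) = 1) :
    ∀ a b c, f a b c = 1 := by
  have key : ∀ c a b, f a b c = 1 := by
    intro c
    induction c using Int.induction_on with
    | zero => intro a b; exact hc a b
    | succ n ih =>
      apply aux_two_dim (fun a b => f a b ((n : ℤ) + 1)) (fun a b => hs a b _)
        (fun a => hbz a _) (fun b => haz b _)
      intro a b
      have h := hrel a b n
      rw [ih a b, ih (a+1) b, ih a (b+1), ih (a+1) (b+1)] at h
      simpa using h
    | pred n ih =>
      apply aux_two_dim (fun a b => f a b (-(n : ℤ) - 1)) (fun a b => hs a b _)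
        (fun a => hbz a _) (fun b => haz b _)
      intro a b
      have h := hrel a b (-(n : ℤ) - 1)
      have e2 : (-(n : ℤ) - 1) + 1 = -(n : ℤ) := by ring
      rw [e2, ih a b, ih (a+1) b, ih a (b+1), ih (a+1) (b+1)] at h
      simpa using h
  exact fun a b c => key c a b

/-- Lemma prod_over_cubes_lemma. -/
theorem statement11 (u : Z3 → ℤ) (hu : ∀ v, u v = 1 ∨ u v = -1) :
    (∃ t₁ t₂ t₃ : ℤ × ℤ → ℤ,
      (∀ p, t₁ p = 1 ∨ t₁ p = -1) ∧
      (∀ p, t₂ p = 1 ∨ t₂ p = -1) ∧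
      (∀ p, t₃ p = 1 ∨ t₃ p = -1) ∧
      (∀ a b c : ℤ, u (a, b, c) = t₁ (b, c) * t₂ (a, c) * t₃ (a, b))) ↔
    (∀ v : Z3, ∏ ε ∈ cube01, u (v + ε) = 1) := by
  have musq : ∀ v, u v * u v = 1 := fun v => aux_sq (hu v)
  have sgn2 : ∀ x y : ℤ, (x = 1 ∨ x = -1) → (y = 1 ∨ y = -1) → (x * y = 1 ∨ x * y = -1) := by
    rintro x y (rfl | rfl) (rfl | rfl) <;> norm_num
  constructor
  · rintro ⟨t₁, t₂, t₃, h1, h2, h3, heq⟩ ⟨a, b, c⟩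
    have m1 : ∀ p, t₁ p * t₁ p = 1 := fun p => aux_sq (h1 p)
    have m2 : ∀ p, t₂ p * t₂ p = 1 := fun p => aux_sq (h2 p)
    have m3 : ∀ p, t₃ p * t₃ p = 1 := fun p => aux_sq (h3 p)
    rw [aux_cube_prod]
    simp only [heq]
    have key : ∀ x1 x2 x3 x4 y1 y2 y3 y4 z1 z2 z3 z4 : ℤ,
        x1 * y1 * z1 * (x1 * y2 * z2) * (x2 * y1 * z3 * (x2 * y2 * z4)) *
        (x3 * y3 * z1 * (x3 * y4 * z2) * (x4 * y3 * z3 * (x4 * y4 * z4))) =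
        (x1 * x1) * ((x2 * x2) * ((x3 * x3) * ((x4 * x4) * ((y1 * y1) * ((y2 * y2) *
        ((y3 * y3) * ((y4 * y4) * ((z1 * z1) * ((z2 * z2) * ((z3 * z3) * (z4 * z4))))))))))) := by
      intros; ring
    rw [key]
    simp only [m1, m2, m3, mul_one]
  · intro hv
    refine ⟨fun p : ℤ × ℤ => u (0, p.1, p.2),
      fun p : ℤ × ℤ => u (p.1, 0, p.2) * u (0, 0, p.2),
      fun p : ℤ × ℤ => u (p.1, p.2, 0) * u (0, p.2, 0) * (u (p.1, 0, 0) * u (0, 0, 0)),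
      fun p => hu _, ?_, ?_, ?_⟩
    · intro p
      exact sgn2 _ _ (hu _) (hu _)
    · intro p
      exact sgn2 _ _ (sgn2 _ _ (hu _) (hu _)) (sgn2 _ _ (hu _) (hu _))
    have hv' : ∀ a b c : ℤ,
        u (a,b,c) * u (a+1,b,c) * (u (a,b+1,c) * u (a+1,b+1,c)) *
        (u (a,b,c+1) * u (a+1,b,c+1) * (u (a,b+1,c+1) * u (a+1,b+1,c+1))) = 1 := by
      intro a b c
      have := hv (a, b, c)
      rwa [aux_cube_prod] at this
    set f : ℤ → ℤ → ℤ → ℤ := fun a b c =>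
      u (a,b,c) * (u (0,b,c) * (u (a,0,c) * u (0,0,c)) *
        (u (a,b,0) * u (0,b,0) * (u (a,0,0) * u (0,0,0)))) with hf
    have hfs : ∀ a b c, f a b c = 1 ∨ f a b c = -1 := by
      intro a b c
      simp only [hf]
      rcases hu (a,b,c) with h1 | h1 <;> rcases hu (0,b,c) with h2 | h2 <;>
        rcases hu (a,0,c) with h3 | h3 <;> rcases hu (0,0,c) with h4 | h4 <;>
        rcases hu (a,b,0) with h5 | h5 <;> rcases hu (0,b,0) with h6 | h6 <;>
        rcases hu (a,0,0) with h7 | h7 <;> rcases hu (0,0,0) with h8 | h8 <;>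
        rw [h1, h2, h3, h4, h5, h6, h7, h8] <;> norm_num
    have hfc : ∀ a b, f a b 0 = 1 := by
      intro a b
      simp only [hf]
      have e : u (a,b,0) * (u (0,b,0) * (u (a,0,0) * u (0,0,0)) *
          (u (a,b,0) * u (0,b,0) * (u (a,0,0) * u (0,0,0)))) =
          (u (a,b,0) * u (a,b,0)) * ((u (0,b,0) * u (0,b,0)) *
          ((u (a,0,0) * u (a,0,0)) * (u (0,0,0) * u (0,0,0)))) := by ring
      rw [e]
      simp only [musq, mul_one]
    have hfb : ∀ a c, f a 0 c = 1 := by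
      intro a c
      simp only [hf]
      have e : u (a,0,c) * (u (0,0,c) * (u (a,0,c) * u (0,0,c)) *
          (u (a,0,0) * u (0,0,0) * (u (a,0,0) * u (0,0,0)))) =
          (u (a,0,c) * u (a,0,c)) * ((u (0,0,c) * u (0,0,c)) *
          ((u (a,0,0) * u (a,0,0)) * (u (0,0,0) * u (0,0,0)))) := by ring
      rw [e]
      simp only [musq, mul_one]
    have hfa : ∀ b c, f 0 b c = 1 := by
      intro b c
      simp only [hf]
      have e : u (0,b,c) * (u (0,b,c) * (u (0,0,c) * u (0,0,c)) *
          (u (0,b,0) * u (0,b,0) * (u (0,0,0) * u (0,0,0)))) =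
          (u (0,b,c) * u (0,b,c)) * ((u (0,0,c) * u (0,0,c)) *
          ((u (0,b,0) * u (0,b,0)) * (u (0,0,0) * u (0,0,0)))) := by ring
      rw [e]
      simp only [musq, mul_one]
    have hfrel : ∀ a b c,
        (f a b c * f (a+1) b c * (f a (b+1) c * f (a+1) (b+1) c)) *
        (f a b (c+1) * f (a+1) b (c+1) * (f a (b+1) (c+1) * f (a+1) (b+1) (c+1))) = 1 := by
      intro a b c
      simp only [hf]
      have e : (u (a,b,c) * (u (0,b,c) * (u (a,0,c) * u (0,0,c)) *
            (u (a,b,0) * u (0,b,0) * (u (a,0,0) * u (0,0,0)))) *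
          (u (a+1,b,c) * (u (0,b,c) * (u (a+1,0,c) * u (0,0,c)) *
            (u (a+1,b,0) * u (0,b,0) * (u (a+1,0,0) * u (0,0,0))))) *
          ((u (a,b+1,c) * (u (0,b+1,c) * (u (a,0,c) * u (0,0,c)) *
            (u (a,b+1,0) * u (0,b+1,0) * (u (a,0,0) * u (0,0,0))))) *
          (u (a+1,b+1,c) * (u (0,b+1,c) * (u (a+1,0,c) * u (0,0,c)) *
            (u (a+1,b+1,0) * u (0,b+1,0) * (u (a+1,0,0) * u (0,0,0))))))) *
          ((u (a,b,c+1) * (u (0,b,c+1) * (u (a,0,c+1) * u (0,0,c+1)) *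
            (u (a,b,0) * u (0,b,0) * (u (a,0,0) * u (0,0,0))))) *
          (u (a+1,b,c+1) * (u (0,b,c+1) * (u (a+1,0,c+1) * u (0,0,c+1)) *
            (u (a+1,b,0) * u (0,b,0) * (u (a+1,0,0) * u (0,0,0))))) *
          ((u (a,b+1,c+1) * (u (0,b+1,c+1) * (u (a,0,c+1) * u (0,0,c+1)) *
            (u (a,b+1,0) * u (0,b+1,0) * (u (a,0,0) * u (0,0,0))))) *
          (u (a+1,b+1,c+1) * (u (0,b+1,c+1) * (u (a+1,0,c+1) * u (0,0,c+1)) *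
            (u (a+1,b+1,0) * u (0,b+1,0) * (u (a+1,0,0) * u (0,0,0))))))) =
          (u (a,b,c) * u (a+1,b,c) * (u (a,b+1,c) * u (a+1,b+1,c)) *
            (u (a,b,c+1) * u (a+1,b,c+1) * (u (a,b+1,c+1) * u (a+1,b+1,c+1)))) *
          ((u (0,b,c) * u (0,b,c)) * ((u (0,b+1,c) * u (0,b+1,c)) *
          ((u (0,b,c+1) * u (0,b,c+1)) * ((u (0,b+1,c+1) * u (0,b+1,c+1)) *
          ((u (a,0,c) * u (a,0,c)) * ((u (a+1,0,c) * u (a+1,0,c)) *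
          ((u (a,0,c+1) * u (a,0,c+1)) * ((u (a+1,0,c+1) * u (a+1,0,c+1)) *
          ((u (0,0,c) * u (0,0,c)) * ((u (0,0,c) * u (0,0,c)) *
          ((u (0,0,c+1) * u (0,0,c+1)) * ((u (0,0,c+1) * u (0,0,c+1)) *
          ((u (a,b,0) * u (a,b,0)) * ((u (a+1,b,0) * u (a+1,b,0)) *
          ((u (a,b+1,0) * u (a,b+1,0)) * ((u (a+1,b+1,0) * u (a+1,b+1,0)) *
          ((u (0,b,0) * u (0,b,0)) * ((u (0,b,0) * u (0,b,0)) *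
          ((u (0,b+1,0) * u (0,b+1,0)) * ((u (0,b+1,0) * u (0,b+1,0)) *
          ((u (a,0,0) * u (a,0,0)) * ((u (a,0,0) * u (a,0,0)) *
          ((u (a+1,0,0) * u (a+1,0,0)) * ((u (a+1,0,0) * u (a+1,0,0)) *
          ((u (0,0,0) * u (0,0,0)) * ((u (0,0,0) * u (0,0,0)) *
          ((u (0,0,0) * u (0,0,0)) * (u (0,0,0) * u (0,0,0))))))))))))))))))))))))))))) := by
        ring
      rw [e]
      simp only [musq, mul_one]
      exact hv' a b c
    intro a b c
    have := aux_three_dim f hfs hfc hfb hfa hfrel a b c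
    simp only [hf] at this
    have goal : u (a,b,c) =
        u (0,b,c) * (u (a,0,c) * u (0,0,c)) *
          (u (a,b,0) * u (0,b,0) * (u (a,0,0) * u (0,0,0))) := by
      rcases hu (a,b,c) with h | h <;> rw [h] at this ⊢ <;> linarith
    exact goal
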